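/- Let L be the backward generator of an irreducible Markov jump process on a finite connected graph G with N vertices, with rates k(x,y). Then the entries of the resolvent satisfy ((I + αL)^{-1})_{xy} = (∑_{k=0}^{N-1} (-1)^k α^k w(F_k^{x→y})) / (∑_{k=0}^{N-1} (-1)^k α^k w(F_k)) for α > 0, where F_k^{x→y} is the set of spanning forests of G with k edges in which every tree is rooted, y is the root of its tree, and x, y lie in the same tree, and F_k is the union over all roots; weights w are products of rates k(x,y) over the directed edges of the forest (empty product = 1). -/

import Mathlib

open Matrix


/-- The one-step relation of a finite set of directed edges. -/
def forestStep {V : Type*} (F : Finset (V × V)) (a b : V) : Prop := (a, b) ∈ F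

/-- `F` is a rooted spanning forest of the graph `G`: all its directed edges
are edges of `G`, every vertex has at most one outgoing edge, and there are no
directed cycles (so each connected component is a tree directed toward its
root). -/
def IsRootedForest {V : Type*} [DecidableEq V] (G : SimpleGraph V)
    (F : Finset (V × V)) : Prop :=
  (∀ e ∈ F, G.Adj e.1 e.2) ∧
  (∀ x : V, (F.filter (fun e => e.1 = x)).card ≤ 1) ∧
  (∀ x y : V, (x, y) ∈ F → ¬ Relation.ReflTransGen (forestStep F) y x)

/-- `x` and `y` lie in the same tree of `F` and `y` is the root of that tree:
there is a directed path from `x` to `y` and `y` has no outgoing edge. -/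
def RootedAt {V : Type*} (F : Finset (V × V)) (x y : V) : Prop :=
  Relation.ReflTransGen (forestStep F) x y ∧ ∀ z, (y, z) ∉ F

/-- The weight of a forest: the product of the rates over its directed edges
(empty product `= 1`). -/
def forestWeight {V : Type*} (k : V → V → ℝ) (F : Finset (V × V)) : ℝ :=
  ∏ e ∈ F, k e.1 e.2

/-- The total weight of the collection of forests satisfying `P`. -/
noncomputable def weightSum {V : Type*} [Fintype V] [DecidableEq V]
    (k : V → V → ℝ) (P : Finset (V × V) → Prop) : ℝ :=
  ∑ F : Finset (V × V), Set.indicator {F | P F} (forestWeight k) F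

open Matrix Finset Relation

set_option linter.unusedSectionVars false

section MF
variable {V : Type*} [Fintype V] [DecidableEq V]

/-- step relation of a function -/
def MFstep (r : V → V) (a b : V) : Prop := r a ≠ a ∧ r a = b

/-- acyclicity -/
def MFacyc (r : V → V) : Prop := ∀ j, ¬ Relation.TransGen (MFstep r) j j

/-- sources -/
def MFsrcs (r : V → V) : Finset V := Finset.univ.filter (fun i => r i ≠ i)

lemma MFstep_det {r : V → V} {a b : V} (h : MFstep r a b) : b = r a := h.2.symm

lemma mem_MFsrcs {r : V → V} {i : V} : i ∈ MFsrcs r ↔ r i ≠ i := by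
  simp [MFsrcs]

/-- iterates give a ReflTransGen path -/
lemma MF_iter_rtg (r : V → V) (a : V) (m : ℕ)
    (h : ∀ l < m, r (r^[l] a) ≠ r^[l] a) :
    Relation.ReflTransGen (MFstep r) a (r^[m] a) := by
  induction m with
  | zero => exact Relation.ReflTransGen.refl
  | succ n ih =>
    have h1 : ∀ l < n, r (r^[l] a) ≠ r^[l] a := fun l hl => h l (hl.trans (Nat.lt_succ_self n))
    refine (ih h1).tail ?_
    exact ⟨h n (Nat.lt_succ_self n), (Function.iterate_succ_apply' r n a).symm⟩

lemma MF_iter_tg (r : V → V) (a : V) (m : ℕ) (hm : 0 < m)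
    (h : ∀ l < m, r (r^[l] a) ≠ r^[l] a) :
    Relation.TransGen (MFstep r) a (r^[m] a) := by
  obtain ⟨n, rfl⟩ := Nat.exists_eq_succ_of_ne_zero hm.ne'
  have h1 : ∀ l < n, r (r^[l] a) ≠ r^[l] a := fun l hl => h l (hl.trans (Nat.lt_succ_self n))
  refine Relation.TransGen.tail' (MF_iter_rtg r a n h1) ?_
  exact ⟨h n (Nat.lt_succ_self n), (Function.iterate_succ_apply' r n a).symm⟩

/-- on an acyclic function every trajectory hits a fixed point fast -/
lemma MF_traj {r : V → V} (hr : MFacyc r) (a : V) :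
    ∃ m < Fintype.card V, r (r^[m] a) = r^[m] a := by
  by_contra hcon
  push_neg at hcon
  have hinj : ¬ Function.Injective (fun l : Fin (Fintype.card V + 1) => r^[(l : ℕ)] a) := by
    intro hinj
    have := Fintype.card_le_of_injective _ hinj
    simp at this
  rw [Function.not_injective_iff] at hinj
  obtain ⟨l1', l2', heq', hne'⟩ := hinj
  have key : ∀ l1 l2 : Fin (Fintype.card V + 1), (l1:ℕ) < (l2:ℕ) → r^[(l1:ℕ)] a = r^[(l2:ℕ)] a → False := by
    intro l1 l2 hlt heq
    have hcyc : Relation.TransGen (MFstep r) (r^[(l1:ℕ)] a) (r^[(l1:ℕ)] a) := by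
      have := MF_iter_tg r (r^[(l1:ℕ)] a) ((l2:ℕ) - (l1:ℕ)) (by omega) ?_
      · rw [← Function.iterate_add_apply] at this
        have h2 : (l2:ℕ) - (l1:ℕ) + (l1:ℕ) = (l2:ℕ) := by omega
        rw [h2, ← heq] at this
        exact this
      · intro l hl
        rw [← Function.iterate_add_apply]
        exact hcon (l + (l1:ℕ)) (by omega)
    exact hr _ hcyc
  have hne2 : (l1':ℕ) ≠ (l2':ℕ) := fun h => hne' (Fin.ext h)
  rcases hne2.lt_or_gt with h | h
  · exact key l1' l2' h heq'
  · exact key l2' l1' h heq'.symm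

/-- the matrix with rows `e_i` (if `r i = i`) or `e_i - e_{r i}`. -/
noncomputable def MFE (r : V → V) : Matrix V V ℝ :=
  Matrix.of fun i => if r i = i then Pi.single i (1:ℝ) else Pi.single i 1 - Pi.single (r i) 1

lemma MFE_apply (r : V → V) (i : V) :
    MFE r i = if r i = i then Pi.single i (1:ℝ) else Pi.single i 1 - Pi.single (r i) 1 := rfl

/-- cycle decomposition helpers -/
lemma MF_cyc_src {r : V → V} {i : V} (h : Relation.TransGen (MFstep r) i i) : r i ≠ i := by
  obtain ⟨b, hib, -⟩ := (Relation.TransGen.head'_iff).mp h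
  exact hib.1

lemma MF_cyc_next {r : V → V} {i : V} (h : Relation.TransGen (MFstep r) i i) :
    Relation.TransGen (MFstep r) (r i) (r i) := by
  obtain ⟨b, hib, hbi⟩ := (Relation.TransGen.head'_iff).mp h
  have hb : b = r i := hib.2.symm
  subst hb
  exact Relation.TransGen.tail' hbi hib

/-- every transGen path corresponds to iteration -/
lemma MF_tg_iter {r : V → V} {a b : V} (h : Relation.TransGen (MFstep r) a b) :
    ∃ m, 0 < m ∧ r^[m] a = b := by
  induction h with
  | single h => exact ⟨1, Nat.one_pos, h.2⟩
  | tail _ h ih =>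
    obtain ⟨m, hm, rfl⟩ := ih
    exact ⟨m + 1, Nat.succ_pos m, by rw [Function.iterate_succ_apply', h.2]⟩

/-- `r` is injective on the set of cycle points -/
lemma MF_cyc_inj {r : V → V} {i1 i2 : V} (h1 : Relation.TransGen (MFstep r) i1 i1)
    (h2 : Relation.TransGen (MFstep r) i2 i2) (he : r i1 = r i2) : i1 = i2 := by
  obtain ⟨m1, hm1, hi1⟩ := MF_tg_iter h1
  obtain ⟨m2, hm2, hi2⟩ := MF_tg_iter h2
  have p1 : ∀ n : ℕ, r^[n * m1] i1 = i1 := by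
    intro n
    induction n with
    | zero => simp
    | succ c ih => rw [Nat.succ_mul, Function.iterate_add_apply, hi1, ih]
  have p2 : ∀ n : ℕ, r^[n * m2] i2 = i2 := by
    intro n
    induction n with
    | zero => simp
    | succ c ih => rw [Nat.succ_mul, Function.iterate_add_apply, hi2, ih]
  have hM : m2 * m1 = (m2 * m1 - 1) + 1 := by
    have : 1 ≤ m2 * m1 := Nat.one_le_iff_ne_zero.mpr (by positivity)
    omega
  have e1 : i1 = r^[m2 * m1 - 1] (r i1) := by
    conv_lhs => rw [← p1 m2]
    rw [hM, Function.iterate_succ_apply]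
    simp
  have e2 : i2 = r^[m2 * m1 - 1] (r i2) := by
    conv_lhs => rw [← p2 m1, Nat.mul_comm m1 m2]
    rw [hM, Function.iterate_succ_apply]
    simp
  rw [e1, e2, he]

open scoped Classical in
/-- the cycle set, as a finset (classically decidable) -/
noncomputable def MFcyc (r : V → V) : Finset V :=
  Finset.univ.filter (fun i => Relation.TransGen (MFstep r) i i)

lemma mem_MFcyc {r : V → V} {i : V} :
    i ∈ MFcyc r ↔ Relation.TransGen (MFstep r) i i := by
  classical
  simp [MFcyc]

lemma MFcyc_image {r : V → V} : (MFcyc r).image r = MFcyc r := by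
  apply Finset.eq_of_subset_of_card_le
  · intro j hj
    obtain ⟨i, hi, rfl⟩ := Finset.mem_image.mp hj
    exact mem_MFcyc.mpr (MF_cyc_next (mem_MFcyc.mp hi))
  · rw [Finset.card_image_of_injOn]
    intro i1 h1 i2 h2 he
    exact MF_cyc_inj (mem_MFcyc.mp h1) (mem_MFcyc.mp h2) he

/-- determinant vanishes whenever there is a cycle, for any matrix agreeing with `MFE r` on
cycle rows. -/
lemma MF_det_zero_of_cycle {r : V → V} (M : Matrix V V ℝ)
    (hrows : ∀ i, Relation.TransGen (MFstep r) i i → M i = MFE r i)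
    (hcyc : ∃ j, Relation.TransGen (MFstep r) j j) : M.det = 0 := by
  rw [← Matrix.exists_vecMul_eq_zero_iff]
  refine ⟨(fun i => if i ∈ MFcyc r then (1:ℝ) else 0), ?_, ?_⟩
  · obtain ⟨j, hj⟩ := hcyc
    intro h0
    have := congrFun h0 j
    simp [mem_MFcyc.mpr hj] at this
  · funext j
    have hv : ((fun i => if i ∈ MFcyc r then (1:ℝ) else 0) ᵥ* M) j
        = ∑ i ∈ MFcyc r, M i j := by
      rw [Matrix.vecMul, dotProduct]
      simp only [ite_mul, one_mul, zero_mul]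
      rw [Finset.sum_ite_mem, Finset.univ_inter]
    have hMrow : ∀ i ∈ MFcyc r, M i j
        = (Pi.single i 1 : V → ℝ) j - (Pi.single (r i) 1 : V → ℝ) j := by
      intro i hi
      have hi' := mem_MFcyc.mp hi
      rw [hrows i hi', MFE_apply, if_neg (MF_cyc_src hi')]
      simp
    have himg : ∑ i ∈ MFcyc r, (Pi.single (r i) 1 : V → ℝ) j
        = ∑ i ∈ (MFcyc r).image r, (Pi.single i 1 : V → ℝ) j := by
      rw [Finset.sum_image]
      intro i1 h1 i2 h2 he
      exact MF_cyc_inj (mem_MFcyc.mp h1) (mem_MFcyc.mp h2) he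
    rw [hv, Finset.sum_congr rfl hMrow, Finset.sum_sub_distrib, himg, MFcyc_image,
      sub_self]
    rfl

lemma MF_exists_exit {r : V → V} (hr : MFacyc r) {i0 : V} (h0 : r i0 ≠ i0) :
    ∃ i, r i ≠ i ∧ r (r i) = r i := by
  obtain ⟨m, -, hm⟩ := MF_traj hr i0
  have hex : ∃ l, r (r^[l] i0) = r^[l] i0 := ⟨m, hm⟩
  classical
  have hl0 : r (r^[Nat.find hex] i0) = r^[Nat.find hex] i0 := Nat.find_spec hex
  have hpos : Nat.find hex ≠ 0 := by
    intro h; rw [h] at hl0; simp only [Function.iterate_zero, id_eq] at hl0; exact h0 hl0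
  obtain ⟨l1, hl1⟩ := Nat.exists_eq_succ_of_ne_zero hpos
  refine ⟨r^[l1] i0, Nat.find_min hex (by omega), ?_⟩
  have h2 : r (r^[l1] i0) = r^[Nat.find hex] i0 := by
    rw [hl1, Function.iterate_succ_apply']
  rw [h2]; exact hl0

lemma MF_det_one {r : V → V} (hr : MFacyc r) : (MFE r).det = 1 := by
  suffices H : ∀ n (r : V → V), MFacyc r → (MFsrcs r).card = n → (MFE r).det = 1 from
    H _ r hr rfl
  intro n
  induction n using Nat.strong_induction_on with
  | _ n ih =>
  intro r hr hcard
  by_cases hS : MFsrcs r = ∅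
  · have hfix : ∀ a : V, r a = a := by
      intro a
      by_contra ha
      have : a ∈ MFsrcs r := mem_MFsrcs.mpr ha
      rw [hS] at this
      exact absurd this (Finset.notMem_empty a)
    have hone : MFE r = 1 := by
      ext a b
      rw [MFE_apply, if_pos (hfix a)]
      simp [Matrix.one_apply, Pi.single_apply, eq_comm]
    rw [hone, Matrix.det_one]
  · obtain ⟨i0, hi0⟩ := Finset.nonempty_iff_ne_empty.mpr hS
    obtain ⟨i, hi, hri⟩ := MF_exists_exit hr (mem_MFsrcs.mp hi0)
    set r' := Function.update r i i with hr'def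
    have hr'i : r' i = i := Function.update_self i i r
    have hr'ne : ∀ a, a ≠ i → r' a = r a := fun a ha => Function.update_of_ne ha i r
    have hstep : ∀ a b, MFstep r' a b → MFstep r a b := by
      intro a b hab
      rcases eq_or_ne a i with rfl | ha
      · exact absurd hr'i hab.1
      · exact ⟨by rw [← hr'ne a ha]; exact hab.1, by rw [← hr'ne a ha]; exact hab.2⟩
    have hacyc' : MFacyc r' := fun j hj => hr j (Relation.TransGen.mono hstep j j hj)
    have hsrcs' : MFsrcs r' = (MFsrcs r).erase i := by
      ext a
      rcases eq_or_ne a i with rfl | ha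
      · simp [mem_MFsrcs, hr'i]
      · simp [mem_MFsrcs, hr'ne a ha, Finset.mem_erase, ha]
    have hicard : i ∈ MFsrcs r := mem_MFsrcs.mpr hi
    have hcard' : (MFsrcs r').card < n := by
      rw [hsrcs', Finset.card_erase_of_mem hicard, hcard]
      have : 0 < n := hcard ▸ Finset.card_pos.mpr ⟨i, hicard⟩
      omega
    have hrow : ∀ a, a ≠ i → MFE r' a = MFE r a := by
      intro a ha
      rw [MFE_apply, MFE_apply, hr'ne a ha]
    have hEr : MFE r = Matrix.updateRow (MFE r') i (Pi.single i 1 - Pi.single (r i) 1) := by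
      ext a b
      rcases eq_or_ne a i with rfl | ha
      · rw [Matrix.updateRow_self, MFE_apply, if_neg hi]
      · rw [Matrix.updateRow_ne ha, hrow a ha]
    rw [hEr, sub_eq_add_neg, Matrix.det_updateRow_add]
    have hfirst : Matrix.updateRow (MFE r') i (Pi.single i 1) = MFE r' := by
      ext a b
      rcases eq_or_ne a i with rfl | ha
      · rw [Matrix.updateRow_self, MFE_apply, if_pos hr'i]
      · rw [Matrix.updateRow_ne ha]
    have hsecond : (Matrix.updateRow (MFE r') i (-(Pi.single (r i) 1 : V → ℝ))).det = 0 := by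
      have hneg : (-(Pi.single (r i) 1 : V → ℝ)) = (-1 : ℝ) • (Pi.single (r i) 1 : V → ℝ) := by
        ext b; simp
      rw [hneg, Matrix.det_updateRow_smul]
      have hzero : (Matrix.updateRow (MFE r') i (Pi.single (r i) 1)).det = 0 := by
        apply Matrix.det_zero_of_row_eq (Ne.symm hi)
        rw [Matrix.updateRow_self, Matrix.updateRow_ne hi]
        have hr'ri : r' (r i) = r i := by rw [hr'ne (r i) hi]; exact hri
        rw [MFE_apply, if_pos hr'ri]
      rw [hzero, mul_zero]
    rw [hfirst, hsecond, add_zero]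
    exact ih _ hcard' r' hacyc' rfl

noncomputable def MFA (r : V → V) : Matrix V V ℝ :=
  Matrix.of fun i j => if r i ≠ i ∧ r i = j then 1 else 0

lemma MFE_eq (r : V → V) : MFE r = 1 - MFA r := by
  ext i j
  rw [MFE_apply, Matrix.sub_apply]
  have hMFA : (MFA r) i j = if r i ≠ i ∧ r i = j then (1:ℝ) else 0 := rfl
  rcases eq_or_ne (r i) i with hfix | hmove
  · have hno : ¬ (r i ≠ i ∧ r i = j) := by tauto
    rw [if_pos hfix, hMFA, if_neg hno, sub_zero]
    simp [Matrix.one_apply, Pi.single_apply, eq_comm]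
  · rw [if_neg hmove, hMFA]
    simp only [Pi.sub_apply]
    rcases eq_or_ne (r i) j with rfl | h3
    · rw [if_pos ⟨hmove, rfl⟩]
      simp [Matrix.one_apply, Pi.single_apply, eq_comm]
    · rw [if_neg (by tauto)]
      have h4 : (Pi.single (r i) 1 : V → ℝ) j = 0 := by
        rw [Pi.single_apply, if_neg (fun h : j = r i => h3 h.symm)]
      rw [h4, sub_zero, sub_zero]
      simp [Matrix.one_apply, Pi.single_apply, eq_comm]

lemma MFA_pow (r : V → V) (m : ℕ) (a b : V) :
    (MFA r ^ m) a b
      = if (∀ l < m, r (r^[l] a) ≠ r^[l] a) ∧ r^[m] a = b then 1 else 0 := by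
  induction m generalizing a with
  | zero => simp [Matrix.one_apply]
  | succ m ih =>
    rw [pow_succ', Matrix.mul_apply]
    rcases eq_or_ne (r a) a with hfix | hmove
    · have h0 : ∀ c, MFA r a c = 0 := by
        intro c; simp [MFA, hfix]
      simp only [h0, zero_mul, Finset.sum_const_zero]
      rw [if_neg]
      rintro ⟨h1, -⟩
      exact h1 0 (Nat.succ_pos m) (by simpa using hfix)
    · have hrow : ∀ c, MFA r a c = if c = r a then 1 else 0 := by
        intro c
        simp only [MFA, Matrix.of_apply]
        rcases eq_or_ne c (r a) with rfl | hc
        · simp [hmove]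
        · simp only [if_neg hc]
          rw [if_neg (fun h : r a ≠ a ∧ r a = c => hc h.2.symm)]
      simp only [hrow, ite_mul, one_mul, zero_mul]
      rw [Finset.sum_ite_eq' Finset.univ (r a) (fun c => (MFA r ^ m) c b),
        if_pos (Finset.mem_univ _)]
      rw [ih (r a)]
      apply if_congr _ rfl rfl
      constructor
      · rintro ⟨h1, h2⟩
        refine ⟨?_, by rwa [Function.iterate_succ_apply]⟩
        intro l hl
        rcases Nat.eq_zero_or_pos l with rfl | hpos
        · simpa using hmove
        · obtain ⟨l', rfl⟩ := Nat.exists_eq_succ_of_ne_zero hpos.ne'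
          rw [Function.iterate_succ_apply]
          exact h1 l' (by omega)
      · rintro ⟨h1, h2⟩
        refine ⟨?_, by rwa [Function.iterate_succ_apply] at h2⟩
        intro l hl
        rw [← Function.iterate_succ_apply]
        exact h1 (l + 1) (by omega)

lemma MFA_nilp {r : V → V} (hr : MFacyc r) : MFA r ^ (Fintype.card V) = 0 := by
  ext a b
  rw [MFA_pow, Matrix.zero_apply, if_neg]
  rintro ⟨h1, -⟩
  obtain ⟨m, hm, hfix⟩ := MF_traj hr a
  exact h1 m hm hfix

lemma MFE_mul_geom {r : V → V} (hr : MFacyc r) :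
    (∑ m ∈ Finset.range (Fintype.card V), MFA r ^ m) * (MFE r) = 1 := by
  have hgeom := geom_sum_mul (MFA r) (Fintype.card V)
  rw [MFA_nilp hr] at hgeom
  have h2 : (∑ m ∈ Finset.range (Fintype.card V), MFA r ^ m) * (MFA r - 1) = -1 := by
    rw [hgeom]; simp
  rw [MFE_eq, show (1 - MFA r) = -(MFA r - 1) from (neg_sub _ _).symm, mul_neg, h2, neg_neg]

lemma MF_rtg_iter {r : V → V} {x y : V} (h : Relation.ReflTransGen (MFstep r) x y) :
    ∃ m, (∀ l < m, r (r^[l] x) ≠ r^[l] x) ∧ r^[m] x = y := by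
  induction h with
  | refl => exact ⟨0, by simp⟩
  | tail hab hstep ih =>
    obtain ⟨m, h1, h2⟩ := ih
    refine ⟨m + 1, ?_, ?_⟩
    · intro l hl
      rcases Nat.lt_or_ge l m with hlm | hlm
      · exact h1 l hlm
      · have : l = m := by omega
        subst this
        rw [h2]
        exact hstep.1
    · rw [Function.iterate_succ_apply', h2, hstep.2]

lemma MF_cond_lt {r : V → V} (hr : MFacyc r) {x : V} {m : ℕ}
    (h1 : ∀ l < m, r (r^[l] x) ≠ r^[l] x) : m < Fintype.card V := by
  by_contra hge
  push_neg at hge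
  have hinj : ¬ Function.Injective (fun l : Fin (Fintype.card V + 1) => r^[(l : ℕ)] x) := by
    intro hinj
    have := Fintype.card_le_of_injective _ hinj
    simp at this
  rw [Function.not_injective_iff] at hinj
  obtain ⟨l1', l2', heq', hne'⟩ := hinj
  have key : ∀ l1 l2 : Fin (Fintype.card V + 1), (l1:ℕ) < (l2:ℕ) →
      r^[(l1:ℕ)] x = r^[(l2:ℕ)] x → False := by
    intro l1 l2 hlt heq
    have hcyc : Relation.TransGen (MFstep r) (r^[(l1:ℕ)] x) (r^[(l1:ℕ)] x) := by
      have := MF_iter_tg r (r^[(l1:ℕ)] x) ((l2:ℕ) - (l1:ℕ)) (by omega) ?_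
      · rw [← Function.iterate_add_apply] at this
        have hadd : (l2:ℕ) - (l1:ℕ) + (l1:ℕ) = (l2:ℕ) := by omega
        rw [hadd, ← heq] at this
        exact this
      · intro l hl
        rw [← Function.iterate_add_apply]
        have hl2 : (l2 : ℕ) ≤ Fintype.card V := by omega
        exact h1 (l + (l1:ℕ)) (by omega)
    exact hr _ hcyc
  have hne2 : (l1':ℕ) ≠ (l2':ℕ) := fun h => hne' (Fin.ext h)
  rcases hne2.lt_or_gt with h | h
  · exact key l1' l2' h heq'
  · exact key l2' l1' h heq'.symm

open scoped Classical in
lemma MF_det_update {r : V → V} {x y : V} (hy : r y = y) :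
    (Matrix.updateRow (MFE r) y (Pi.single x 1)).det
      = if MFacyc r ∧ Relation.ReflTransGen (MFstep r) x y then 1 else 0 := by
  by_cases hr : MFacyc r
  · have hdet := MF_det_one hr
    have hBE := MFE_mul_geom hr
    have hEB : MFE r * (∑ m ∈ Finset.range (Fintype.card V), MFA r ^ m) = 1 :=
      mul_eq_one_comm.mp hBE
    have hadj : (MFE r).adjugate = ∑ m ∈ Finset.range (Fintype.card V), MFA r ^ m := by
      have hma : MFE r * (MFE r).adjugate = (MFE r).det • 1 := Matrix.mul_adjugate _
      calc (MFE r).adjugate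
          = ((∑ m ∈ Finset.range (Fintype.card V), MFA r ^ m) * MFE r) * (MFE r).adjugate := by
            rw [hBE, one_mul]
        _ = (∑ m ∈ Finset.range (Fintype.card V), MFA r ^ m) * (MFE r * (MFE r).adjugate) :=
            mul_assoc _ _ _
        _ = ∑ m ∈ Finset.range (Fintype.card V), MFA r ^ m := by
            rw [hma, hdet, one_smul, mul_one]
    rw [← Matrix.adjugate_apply, hadj, Matrix.sum_apply]
    simp only [MFA_pow]
    by_cases hreach : Relation.ReflTransGen (MFstep r) x y
    · rw [if_pos ⟨hr, hreach⟩]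
      obtain ⟨m0, hc1, hc2⟩ := MF_rtg_iter hreach
      have hmem : m0 ∈ Finset.range (Fintype.card V) :=
        Finset.mem_range.mpr (MF_cond_lt hr hc1)
      refine Eq.trans (Finset.sum_eq_single_of_mem m0 hmem ?_) (if_pos ⟨hc1, hc2⟩)
      intro m hm hne
      rw [if_neg]
      rintro ⟨hd1, hd2⟩
      rcases hne.lt_or_gt with hlt | hlt
      · exact hc1 m hlt (by rw [hd2, hy])
      · exact hd1 m0 hlt (by rw [hc2, hy])
    · rw [if_neg (by tauto)]
      apply Finset.sum_eq_zero
      intro m _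
      rw [if_neg]
      rintro ⟨hd1, hd2⟩
      exact hreach (hd2 ▸ MF_iter_rtg r x m hd1)
  · rw [if_neg (by tauto)]
    apply MF_det_zero_of_cycle (r := r)
    · intro i hi
      have hiy : i ≠ y := by
        intro h
        exact (MF_cyc_src hi) (h ▸ hy)
      rw [Matrix.updateRow_ne hiy]
    · rw [MFacyc] at hr
      push_neg at hr
      exact hr

/-- summand decomposition of the rows of `1 + α • L` -/
noncomputable def MFgrow (α : ℝ) (k : V → V → ℝ) (i z : V) : V → ℝ :=
  if z = i then Pi.single i 1 else (-(α * k i z)) • (Pi.single i 1 - Pi.single z 1)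

lemma MF_row_sum (α : ℝ) (k : V → V → ℝ) (L : Matrix V V ℝ)
    (hL : ∀ x y, L x y = if x = y then -(∑ z ∈ Finset.univ.erase x, k x z) else k x y)
    (i : V) : (1 + α • L) i = ∑ z, MFgrow α k i z := by
  funext j
  have hlhs : (1 + α • L) i j = (if i = j then (1:ℝ) else 0) + α * L i j := by
    simp [Matrix.add_apply, Matrix.one_apply, Matrix.smul_apply]
  have hsplit : (∑ z, MFgrow α k i z) j
      = MFgrow α k i i j + ∑ z ∈ Finset.univ.erase i, MFgrow α k i z j := by
    rw [Finset.sum_apply]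
    rw [← Finset.add_sum_erase _ _ (Finset.mem_univ i)]
  have hgi : MFgrow α k i i j = (if i = j then (1:ℝ) else 0) := by
    rw [MFgrow, if_pos rfl, Pi.single_apply]
    simp [eq_comm]
  have hgz : ∀ z ∈ Finset.univ.erase i, MFgrow α k i z j
      = -(α * k i z) * ((if j = i then (1:ℝ) else 0) - (if j = z then 1 else 0)) := by
    intro z hz
    have hzi : z ≠ i := (Finset.mem_erase.mp hz).1
    rw [MFgrow, if_neg hzi]
    simp [Pi.single_apply]
  rw [hlhs, hsplit, hgi, Finset.sum_congr rfl hgz]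
  rcases eq_or_ne j i with rfl | hji
  · have hz2 : ∀ z ∈ Finset.univ.erase j,
        -(α * k j z) * ((if j = j then (1:ℝ) else 0) - (if j = z then 1 else 0))
        = -(α * k j z) := by
      intro z hz
      have hzi : z ≠ j := (Finset.mem_erase.mp hz).1
      rw [if_pos rfl, if_neg (fun h => hzi h.symm), sub_zero, mul_one]
    rw [Finset.sum_congr rfl hz2, hL j j, if_pos rfl]
    congr 1
    rw [if_pos rfl, mul_neg, Finset.mul_sum, ← Finset.sum_neg_distrib]

  · rw [if_neg (fun h => hji h.symm), if_neg hji]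
    have hz2 : ∀ z ∈ Finset.univ.erase i,
        -(α * k i z) * ((0:ℝ) - (if j = z then 1 else 0))
        = if z = j then α * k i z else 0 := by
      intro z hz
      rcases eq_or_ne z j with rfl | hzj
      · rw [if_pos rfl, if_pos rfl]; ring
      · rw [if_neg (fun h => hzj h.symm), if_neg hzj, sub_zero, mul_zero]
    rw [Finset.sum_congr rfl hz2, Finset.sum_ite_eq' (Finset.univ.erase i) j
      (fun z => α * k i z)]
    rw [if_pos (Finset.mem_erase.mpr ⟨hji, Finset.mem_univ j⟩), hL i j,
      if_neg (fun h : i = j => hji h.symm)]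

lemma MFgrow_eq (α : ℝ) (k : V → V → ℝ) (r : V → V) (i : V) :
    MFgrow α k i (r i) = (if r i = i then (1:ℝ) else -(α * k i (r i))) • MFE r i := by
  rcases eq_or_ne (r i) i with hfix | hmove
  · simp [MFgrow, MFE_apply, hfix]
  · rw [MFgrow, if_neg hmove, if_neg hmove, MFE_apply, if_neg hmove]

lemma MF_coeff_prod (α : ℝ) (k : V → V → ℝ) (r : V → V) :
    (∏ i, (if r i = i then (1:ℝ) else -(α * k i (r i))))
      = (-1 : ℝ)^(MFsrcs r).card * α^(MFsrcs r).card * ∏ i ∈ MFsrcs r, k i (r i) := by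
  have h1 : (∏ i, (if r i = i then (1:ℝ) else -(α * k i (r i))))
      = ∏ i ∈ MFsrcs r, -(α * k i (r i)) := by
    rw [MFsrcs, Finset.prod_filter]
    apply Finset.prod_congr rfl
    intro i _
    rcases eq_or_ne (r i) i with hfix | hmove
    · rw [if_pos hfix, if_neg (fun h => h hfix)]
    · rw [if_neg hmove, if_pos hmove]
  rw [h1]
  have h2 : ∀ i ∈ MFsrcs r, -(α * k i (r i)) = (-1) * α * k i (r i) := by
    intro i _; ring
  rw [Finset.prod_congr rfl h2]
  rw [Finset.prod_mul_distrib, Finset.prod_mul_distrib, Finset.prod_const, Finset.prod_const]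

open scoped Classical in
lemma MF_det_MFE (r : V → V) : (MFE r).det = if MFacyc r then (1:ℝ) else 0 := by
  by_cases hr : MFacyc r
  · rw [if_pos hr, MF_det_one hr]
  · rw [if_neg hr]
    apply MF_det_zero_of_cycle (r := r) _ (fun i _ => rfl)
    rw [MFacyc] at hr
    push_neg at hr
    exact hr

open scoped Classical in
lemma MF_det_den (α : ℝ) (k : V → V → ℝ) (L : Matrix V V ℝ)
    (hL : ∀ x y, L x y = if x = y then -(∑ z ∈ Finset.univ.erase x, k x z) else k x y) :
    (1 + α • L).det
      = ∑ r : V → V, (if MFacyc r then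
          (-1 : ℝ)^(MFsrcs r).card * α^(MFsrcs r).card * ∏ i ∈ MFsrcs r, k i (r i)
          else 0) := by
  have hM : (1 + α • L) = Matrix.of (fun i => ∑ z, MFgrow α k i z) :=
    funext (MF_row_sum α k L hL)
  rw [hM]
  have hdet : ∀ M : Matrix V V ℝ, M.det = Matrix.detRowAlternating.toMultilinearMap M :=
    fun _ => rfl
  rw [hdet]
  have hsum := MultilinearMap.map_sum
    (Matrix.detRowAlternating (n := V) (R := ℝ)).toMultilinearMap (g := fun i z => MFgrow α k i z)
  rw [show (Matrix.of fun i => ∑ z, MFgrow α k i z : Matrix V V ℝ)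
      = (fun i => ∑ z, MFgrow α k i z) from rfl]
  rw [hsum]
  apply Finset.sum_congr rfl
  intro r _
  have hrow : (fun i => MFgrow α k i (r i))
      = fun i => (if r i = i then (1:ℝ) else -(α * k i (r i))) • MFE r i := by
    funext i
    exact MFgrow_eq α k r i
  rw [hrow, MultilinearMap.map_smul_univ _ _ (fun i => (MFE r i : V → ℝ)), MF_coeff_prod]
  rw [← hdet (MFE r), MF_det_MFE]
  by_cases hr : MFacyc r
  · rw [if_pos hr, if_pos hr, smul_eq_mul, mul_one]
  · rw [if_neg hr, if_neg hr, smul_eq_mul, mul_zero]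

open scoped Classical in
lemma MF_det_num (α : ℝ) (k : V → V → ℝ) (L : Matrix V V ℝ)
    (hL : ∀ x y, L x y = if x = y then -(∑ z ∈ Finset.univ.erase x, k x z) else k x y)
    (x y : V) :
    (Matrix.updateRow (1 + α • L) y (Pi.single x 1)).det
      = ∑ r : V → V,
          (if r y = y ∧ MFacyc r ∧ Relation.ReflTransGen (MFstep r) x y then
            (-1:ℝ)^(MFsrcs r).card * α^(MFsrcs r).card * ∏ i ∈ MFsrcs r, k i (r i)
          else 0) := by
  classical
  set T : V → Finset V := fun i => if i = y then {y} else Finset.univ with hT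
  set g : V → V → (V → ℝ) := fun i z => if i = y then Pi.single x 1 else MFgrow α k i z
    with hg
  have hM : Matrix.updateRow (1 + α • L) y (Pi.single x 1)
      = Matrix.of (fun i => ∑ z ∈ T i, g i z) := by
    funext i
    rcases eq_or_ne i y with rfl | hiy
    · rw [Matrix.updateRow_self]
      show Pi.single x 1 = ∑ z ∈ T i, g i z
      rw [show T i = {i} from if_pos rfl, Finset.sum_singleton,
        show g i i = Pi.single x 1 from if_pos rfl]
    · rw [Matrix.updateRow_ne hiy]
      rw [MF_row_sum α k L hL i]
      show (∑ z, MFgrow α k i z) = ∑ z ∈ T i, g i z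
      rw [show T i = Finset.univ from if_neg hiy]
      exact Finset.sum_congr rfl (fun z _ => (show g i z = MFgrow α k i z from if_neg hiy).symm)
  rw [hM]
  have hdet : ∀ M : Matrix V V ℝ, M.det = Matrix.detRowAlternating.toMultilinearMap M :=
    fun _ => rfl
  rw [hdet]
  rw [show (Matrix.of fun i => ∑ z ∈ T i, g i z : Matrix V V ℝ)
      = (fun i => ∑ z ∈ T i, g i z) from rfl]
  rw [MultilinearMap.map_sum_finset]
  have hpi : Fintype.piFinset T = Finset.univ.filter (fun r : V → V => r y = y) := by
    ext r
    rw [Fintype.mem_piFinset, Finset.mem_filter]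
    constructor
    · intro h
      have := h y
      rw [hT] at this
      simp at this
      exact ⟨Finset.mem_univ r, this⟩
    · rintro ⟨-, hy⟩
      intro i
      rw [hT]
      rcases eq_or_ne i y with rfl | hiy
      · simpa using hy
      · simp [hiy]
  rw [hpi, Finset.sum_filter]
  apply Finset.sum_congr rfl
  intro r _
  by_cases hry : r y = y
  · rw [if_pos hry]
    have hrowg : (fun i => g i (r i))
        = fun i => (if r i = i then (1:ℝ) else -(α * k i (r i))) •
            (Matrix.updateRow (MFE r) y (Pi.single x 1)) i := by
      funext i
      rcases eq_or_ne i y with rfl | hiy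
      · rw [Matrix.updateRow_self]
        simp [hg, hry]
      · rw [Matrix.updateRow_ne hiy]
        simp only [hg, if_neg hiy]
        exact MFgrow_eq α k r i
    rw [hrowg, MultilinearMap.map_smul_univ _ _
        (fun i => ((Matrix.updateRow (MFE r) y (Pi.single x 1)) i : V → ℝ)), MF_coeff_prod,
      ← hdet (Matrix.updateRow (MFE r) y (Pi.single x 1)), MF_det_update hry]
    by_cases hrest : MFacyc r ∧ Relation.ReflTransGen (MFstep r) x y
    · rw [if_pos hrest, if_pos ⟨hry, hrest⟩, smul_eq_mul, mul_one]
    · rw [if_neg hrest, if_neg (fun h => hrest ⟨h.2.1, h.2.2⟩), smul_eq_mul, mul_zero]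
  · rw [if_neg hry, if_neg (fun h => hry h.1)]

/-- the functional graph of `r` -/
def MFgraph (r : V → V) : Finset (V × V) := (MFsrcs r).image (fun i => (i, r i))

lemma mem_MFgraph {r : V → V} {a b : V} : (a, b) ∈ MFgraph r ↔ r a ≠ a ∧ r a = b := by
  constructor
  · intro h
    obtain ⟨i, hi, heq⟩ := Finset.mem_image.mp h
    obtain ⟨h1, h2⟩ := Prod.mk.inj heq
    subst h1
    exact ⟨mem_MFsrcs.mp hi, h2⟩
  · rintro ⟨h1, h2⟩
    exact Finset.mem_image.mpr ⟨a, mem_MFsrcs.mpr h1, by rw [h2]⟩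

lemma MFgraph_step (r : V → V) : forestStep (MFgraph r) = MFstep r := by
  funext a b
  exact propext mem_MFgraph

lemma MFgraph_card (r : V → V) : (MFgraph r).card = (MFsrcs r).card :=
  Finset.card_image_of_injective _ (fun i j h => congrArg Prod.fst h)

lemma MFgraph_weight (k : V → V → ℝ) (r : V → V) :
    forestWeight k (MFgraph r) = ∏ i ∈ MFsrcs r, k i (r i) := by
  rw [forestWeight, MFgraph, Finset.prod_image (fun i _ j _ h => congrArg Prod.fst h)]

lemma MFgraph_inj : Function.Injective (MFgraph : (V → V) → Finset (V × V)) := by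
  intro r1 r2 h
  funext a
  rcases eq_or_ne (r1 a) a with h1 | h1
  · rcases eq_or_ne (r2 a) a with h2 | h2
    · rw [h1, h2]
    · have : (a, r2 a) ∈ MFgraph r1 := h ▸ mem_MFgraph.mpr ⟨h2, rfl⟩
      exact absurd (mem_MFgraph.mp this).1 (fun hh => hh h1)
  · have : (a, r1 a) ∈ MFgraph r2 := h ▸ mem_MFgraph.mpr ⟨h1, rfl⟩
    exact ((mem_MFgraph.mp this).2).symm

lemma MF_exists_graph {F : Finset (V × V)} (hloop : ∀ a, (a, a) ∉ F)
    (hout : ∀ a : V, (F.filter (fun e => e.1 = a)).card ≤ 1) :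
    ∃ r : V → V, MFgraph r = F := by
  classical
  have huniq : ∀ a b c : V, (a, b) ∈ F → (a, c) ∈ F → b = c := by
    intro a b c hb hc
    by_contra hne
    have hsub : ({(a, b), (a, c)} : Finset (V × V)) ⊆ F.filter (fun e => e.1 = a) := by
      intro e he
      rcases Finset.mem_insert.mp he with rfl | he2
      · exact Finset.mem_filter.mpr ⟨hb, rfl⟩
      · rw [Finset.mem_singleton] at he2
        subst he2
        exact Finset.mem_filter.mpr ⟨hc, rfl⟩
    have h2 : ({(a, b), (a, c)} : Finset (V × V)).card = 2 := by
      rw [Finset.card_insert_of_notMem (by simp [hne]), Finset.card_singleton]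
    have h3 := Finset.card_le_card hsub
    have h4 := hout a
    omega
  refine ⟨fun a => if h : ∃ b, (a, b) ∈ F then h.choose else a, ?_⟩
  ext e
  obtain ⟨a, b⟩ := e
  rw [mem_MFgraph]
  constructor
  · rintro ⟨h1, h2⟩
    by_cases h : ∃ b', (a, b') ∈ F
    · have hspec := h.choose_spec
      simp only [dif_pos h] at h2
      rw [← h2]
      exact hspec
    · simp only [dif_neg h] at h1
      exact absurd rfl h1
  · intro hab
    have h : ∃ b', (a, b') ∈ F := ⟨b, hab⟩
    have hspec := h.choose_spec
    have hchoose : h.choose = b := huniq a _ b hspec hab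
    constructor
    · simp only [dif_pos h, hchoose]
      intro hba
      rw [hba] at hab
      exact hloop a hab
    · simp only [dif_pos h, hchoose]

lemma MF_hout (r : V → V) (a : V) :
    ((MFgraph r).filter (fun e => e.1 = a)).card ≤ 1 := by
  apply Finset.card_le_one.mpr
  intro e1 h1 e2 h2
  obtain ⟨m1, f1⟩ := Finset.mem_filter.mp h1
  obtain ⟨m2, f2⟩ := Finset.mem_filter.mp h2
  obtain ⟨a1, b1⟩ := e1
  obtain ⟨a2, b2⟩ := e2
  simp only at f1 f2
  subst f1; subst f2
  rw [mem_MFgraph] at m1 m2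
  rw [← m1.2, ← m2.2]

lemma MF_acyc_iff (r : V → V) :
    MFacyc r ↔ ∀ a b : V, (a, b) ∈ MFgraph r →
      ¬ Relation.ReflTransGen (forestStep (MFgraph r)) b a := by
  rw [MFgraph_step]
  constructor
  · intro hr a b hab hba
    have hstep : MFstep r a b := mem_MFgraph.mp hab
    exact hr a (Relation.TransGen.head' hstep hba)
  · intro h j hj
    obtain ⟨c, hjc, hcj⟩ := (Relation.TransGen.head'_iff).mp hj
    exact h j c (mem_MFgraph.mpr hjc) hcj

lemma MF_card_lt [Nonempty V] {r : V → V} (hr : MFacyc r) :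
    (MFsrcs r).card < Fintype.card V := by
  have hfix : ∃ v, r v = v := by
    have a : V := Classical.arbitrary V
    rcases eq_or_ne (r a) a with h | h
    · exact ⟨a, h⟩
    · obtain ⟨i, -, h2⟩ := MF_exists_exit hr h
      exact ⟨r i, h2⟩
  obtain ⟨v, hv⟩ := hfix
  have hnot : v ∉ MFsrcs r := by
    rw [mem_MFsrcs]
    exact fun h => h hv
  rw [← Finset.card_univ]
  exact Finset.card_lt_card ⟨Finset.subset_univ _, fun hsub => hnot (hsub (Finset.mem_univ v))⟩

open scoped Classical in
lemma MF_transfer (G : SimpleGraph V) (k : V → V → ℝ)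
    (hk0 : ∀ a b, ¬ G.Adj a b → k a b = 0) (c : ℕ → ℝ)
    (Q : (V → V) → Prop) (Q' : Finset (V × V) → Prop)
    (hQ : ∀ r : V → V, Q r ↔ Q' (MFgraph r)) :
    (∑ r : V → V,
        (if MFacyc r ∧ Q r then c (MFsrcs r).card * ∏ i ∈ MFsrcs r, k i (r i) else 0))
      = ∑ F : Finset (V × V),
          (if IsRootedForest G F ∧ Q' F then c F.card * forestWeight k F else 0) := by
  have hzero : ∀ F ∈ (Finset.univ : Finset (Finset (V × V))),
      F ∉ Finset.univ.image (MFgraph : (V → V) → Finset (V × V)) →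
      (if IsRootedForest G F ∧ Q' F then c F.card * forestWeight k F else 0) = 0 := by
    intro F _ hF
    rw [if_neg]
    rintro ⟨hirf, -⟩
    apply hF
    have hloop : ∀ a, (a, a) ∉ F := by
      intro a ha
      exact hirf.2.2 a a ha Relation.ReflTransGen.refl
    obtain ⟨r, hr⟩ := MF_exists_graph hloop hirf.2.1
    exact Finset.mem_image.mpr ⟨r, Finset.mem_univ r, hr⟩
  rw [← Finset.sum_subset (Finset.subset_univ _) hzero]
  rw [Finset.sum_image (fun r _ s _ h => MFgraph_inj h)]
  apply Finset.sum_congr rfl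
  intro r _
  by_cases hacyc : MFacyc r ∧ Q r
  · by_cases hadj : ∀ e ∈ MFgraph r, G.Adj e.1 e.2
    · have hirf : IsRootedForest G (MFgraph r) :=
        ⟨hadj, MF_hout r, fun a b hab => (MF_acyc_iff r).mp hacyc.1 a b hab⟩
      rw [if_pos hacyc, if_pos ⟨hirf, (hQ r).mp hacyc.2⟩, MFgraph_card, MFgraph_weight]
    · push_neg at hadj
      obtain ⟨e, he, hne⟩ := hadj
      have hwz : (∏ i ∈ MFsrcs r, k i (r i)) = 0 := by
        obtain ⟨a, b⟩ := e
        have hm := mem_MFgraph.mp he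
        apply Finset.prod_eq_zero (mem_MFsrcs.mpr hm.1)
        rw [hm.2]
        exact hk0 a b hne
      have hirf : ¬ IsRootedForest G (MFgraph r) := fun h => hne (h.1 e he)
      rw [if_pos hacyc, if_neg (fun h => hirf h.1), hwz, mul_zero]
  · rw [if_neg hacyc, if_neg]
    rintro ⟨hirf, hq'⟩
    exact hacyc ⟨(MF_acyc_iff r).mpr (fun a b hab => hirf.2.2 a b hab), (hQ r).mpr hq'⟩

lemma MF_weightSum_congr (k : V → V → ℝ) {P P' : Finset (V × V) → Prop}
    (h : ∀ F, P F ↔ P' F) : weightSum k P = weightSum k P' := by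
  have : P = P' := funext (fun F => propext (h F))
  rw [this]

open scoped Classical in
lemma MF_weightSum_eq (k : V → V → ℝ) (P : Finset (V × V) → Prop) :
    weightSum k P = ∑ F : Finset (V × V), (if P F then forestWeight k F else 0) := by
  rw [weightSum]
  apply Finset.sum_congr rfl
  intro F _
  rw [Set.indicator_apply]
  simp only [Set.mem_setOf_eq]

open scoped Classical in
lemma MF_regroup (α : ℝ) (k : V → V → ℝ) (P : Finset (V × V) → Prop)
    (hP : ∀ F, P F → F.card < Fintype.card V) :
    (∑ j ∈ Finset.range (Fintype.card V), (-1:ℝ)^j * α^j *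
        weightSum k (fun F => P F ∧ F.card = j))
      = ∑ F : Finset (V × V),
          (if P F then (-1:ℝ)^F.card * α^F.card * forestWeight k F else 0) := by
  have h1 := fun j => MF_weightSum_eq k (fun F => P F ∧ F.card = j)
  simp only [h1, Finset.mul_sum]
  rw [Finset.sum_comm]
  apply Finset.sum_congr rfl
  intro F _
  by_cases hPF : P F
  · rw [if_pos hPF]
    have hmem : F.card ∈ Finset.range (Fintype.card V) := Finset.mem_range.mpr (hP F hPF)
    refine Eq.trans (Finset.sum_eq_single_of_mem F.card hmem ?_) ?_
    · intro j _ hj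
      rw [if_neg (fun h => hj h.2.symm), mul_zero]
    · rw [if_pos ⟨hPF, rfl⟩]
  · rw [if_neg hPF]
    apply Finset.sum_eq_zero
    intro j _
    rw [if_neg (fun h => hPF h.1), mul_zero]


lemma MF_IRF_card_lt [Nonempty V] {G : SimpleGraph V} {F : Finset (V × V)}
    (h : IsRootedForest G F) : F.card < Fintype.card V := by
  have hloop : ∀ a, (a, a) ∉ F := fun a ha => h.2.2 a a ha Relation.ReflTransGen.refl
  obtain ⟨r, rfl⟩ := MF_exists_graph hloop h.2.1
  rw [MFgraph_card]
  exact MF_card_lt ((MF_acyc_iff r).mpr h.2.2)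

open scoped Classical in
lemma MF_final_den [Nonempty V] (G : SimpleGraph V) (k : V → V → ℝ)
    (hk0 : ∀ a b, ¬ G.Adj a b → k a b = 0) (α : ℝ) :
    (∑ r : V → V, (if MFacyc r then
        (-1 : ℝ)^(MFsrcs r).card * α^(MFsrcs r).card * ∏ i ∈ MFsrcs r, k i (r i)
        else 0))
      = ∑ j ∈ Finset.range (Fintype.card V), (-1:ℝ)^j * α^j *
          weightSum k (fun F => IsRootedForest G F ∧ F.card = j) := by
  refine Eq.trans ?_ (Eq.trans (MF_transfer G k hk0 (fun n => (-1:ℝ)^n * α^n)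
    (fun _ => True) (fun _ => True) (fun r => Iff.rfl)) ?_)
  · apply Finset.sum_congr rfl
    intro r _
    by_cases h : MFacyc r <;> simp [h]
  · refine Eq.trans (Finset.sum_congr rfl ?_)
      (MF_regroup α k (fun F => IsRootedForest G F) (fun F h => MF_IRF_card_lt h)).symm
    intro F _
    by_cases h : IsRootedForest G F <;> simp [h]

open scoped Classical in
lemma MF_final_num [Nonempty V] (G : SimpleGraph V) (k : V → V → ℝ)
    (hk0 : ∀ a b, ¬ G.Adj a b → k a b = 0) (α : ℝ) (x y : V) :
    (∑ r : V → V, (if r y = y ∧ MFacyc r ∧ Relation.ReflTransGen (MFstep r) x y then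
        (-1 : ℝ)^(MFsrcs r).card * α^(MFsrcs r).card * ∏ i ∈ MFsrcs r, k i (r i)
        else 0))
      = ∑ j ∈ Finset.range (Fintype.card V), (-1:ℝ)^j * α^j *
          weightSum k (fun F => IsRootedForest G F ∧ F.card = j ∧ RootedAt F x y) := by
  have hQ : ∀ r : V → V,
      (fun s : V → V => s y = y ∧ Relation.ReflTransGen (MFstep s) x y) r
        ↔ RootedAt (MFgraph r) x y := by
    intro r
    rw [RootedAt, MFgraph_step]
    constructor
    · rintro ⟨h1, h2⟩
      exact ⟨h2, fun z hz => (mem_MFgraph.mp hz).1 h1⟩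
    · rintro ⟨h1, h2⟩
      refine ⟨?_, h1⟩
      by_contra hry
      exact h2 (r y) (mem_MFgraph.mpr ⟨hry, rfl⟩)
  refine Eq.trans ?_ (Eq.trans (MF_transfer G k hk0 (fun n => (-1:ℝ)^n * α^n)
    (fun s : V → V => s y = y ∧ Relation.ReflTransGen (MFstep s) x y)
    (fun F => RootedAt F x y) hQ) ?_)
  · apply Finset.sum_congr rfl
    intro r _
    by_cases h1 : r y = y <;> by_cases h2 : MFacyc r <;>
      by_cases h3 : Relation.ReflTransGen (MFstep r) x y <;> simp [h1, h2, h3]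
  · refine Eq.trans (Finset.sum_congr rfl ?_)
      (Eq.trans (MF_regroup α k (fun F => IsRootedForest G F ∧ RootedAt F x y)
        (fun F h => MF_IRF_card_lt h.1)).symm ?_)
    · intro F _
      by_cases h1 : IsRootedForest G F <;> by_cases h2 : RootedAt F x y <;> simp [h1, h2]
    · apply Finset.sum_congr rfl
      intro j _
      congr 1
      apply MF_weightSum_congr
      intro F
      tauto

end MF

theorem matrix_forest_resolvent
    {V : Type*} [Fintype V] [DecidableEq V]
    (G : SimpleGraph V) (hG : G.Connected)
    (k : V → V → ℝ) (hkpos : ∀ x y, G.Adj x y → 0 < k x y)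
    (hk0 : ∀ x y, ¬ G.Adj x y → k x y = 0)
    (L : Matrix V V ℝ)
    (hL : ∀ x y, L x y = if x = y then -(∑ z ∈ Finset.univ.erase x, k x z) else k x y)
    (α : ℝ) (hα : 0 < α) (x y : V) :
    (1 + α • L)⁻¹ x y =
      (∑ j ∈ Finset.range (Fintype.card V), (-1 : ℝ) ^ j * α ^ j *
          weightSum k (fun F => IsRootedForest G F ∧ F.card = j ∧ RootedAt F x y)) /
        (∑ j ∈ Finset.range (Fintype.card V), (-1 : ℝ) ^ j * α ^ j *
          weightSum k (fun F => IsRootedForest G F ∧ F.card = j)) := by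
  classical
  have hNe : Nonempty V := hG.nonempty
  rw [Matrix.inv_def, Matrix.smul_apply, smul_eq_mul, Ring.inverse_eq_inv,
    Matrix.adjugate_apply]
  rw [MF_det_num α k L hL x y, MF_det_den α k L hL]
  rw [MF_final_num G k hk0 α x y, MF_final_den G k hk0 α]
  rw [inv_mul_eq_div]
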